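/- arXiv:0901.2186 — 2 statements merged into one kernel-verified Lean document; each statement's English description precedes it below -/
import Mathlib

section
/- An irrational number x ∈ [0,1] is a quadratic irrational (a root of a quadratic polynomial with integer coefficients) if and only if its continued fraction expansion is eventually periodic, i.e. there exist k ≥ 1 and N ≥ 0 such that a_{n+k}(x) = a_n(x) for all n > N. -/
/-- The Gauss map `τ(x) = 1/x - ⌊1/x⌋`. -/
noncomputable def gaussMap (x : ℝ) : ℝ := Int.fract (1 / x)

/-- The `n`-th partial quotient (indexed from `0`) of the continued fraction
expansion of `x`: `a_{n+1}(x) = ⌊1/τⁿ(x)⌋`. -/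
noncomputable def pq (x : ℝ) (n : ℕ) : ℤ := ⌊1 / (gaussMap^[n] x)⌋

namespace EL

def Good (t : ℝ) : Prop := Irrational t ∧ 0 < t ∧ t < 1

lemma rat_lin {t : ℝ} (ht : Irrational t) {B C : ℤ} (hB : B ≠ 0)
    (h : (B : ℝ) * t + C = 0) : False := by
  have hB' : (B : ℝ) ≠ 0 := Int.cast_ne_zero.mpr hB
  have : t = ((-C / B : ℚ) : ℝ) := by push_cast; field_simp; linarith
  exact Rat.not_irrational _ (this ▸ ht)

lemma good_gauss {t : ℝ} (h : Good t) : Good (gaussMap t) := by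
  obtain ⟨hi, h0, h1⟩ := h
  have hinv : Irrational (1 / t) := by rw [one_div]; exact hi.inv
  have hfr : Irrational (gaussMap t) := by
    unfold gaussMap Int.fract
    exact hinv.sub_intCast _
  refine ⟨hfr, ?_, Int.fract_lt_one _⟩
  rcases lt_or_eq_of_le (Int.fract_nonneg (1 / t)) with h | h
  · exact h
  · exact absurd (h ▸ hfr) not_irrational_zero

lemma good_iter {t : ℝ} (h : Good t) (n : ℕ) : Good (gaussMap^[n] t) := by
  induction n with
  | zero => exact h
  | succ n ih => rw [Function.iterate_succ_apply']; exact good_gauss ih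

lemma key_id {t : ℝ} (h : Good t) (n : ℕ) :
    (gaussMap^[n] t) * ((pq t n : ℝ) + gaussMap^[n+1] t) = 1 := by
  obtain ⟨hi, h0, h1⟩ := good_iter h n
  rw [Function.iterate_succ_apply']
  show gaussMap^[n] t * ((⌊1 / gaussMap^[n] t⌋ : ℝ) + Int.fract (1 / gaussMap^[n] t)) = 1
  rw [Int.floor_add_fract]
  field_simp

lemma pq_one_le {t : ℝ} (h : Good t) (n : ℕ) : 1 ≤ pq t n := by
  obtain ⟨hi, h0, h1⟩ := good_iter h n
  have : (1 : ℝ) ≤ 1 / gaussMap^[n] t := by rw [le_div_iff₀ h0]; linarith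
  exact_mod_cast Int.le_floor.mpr (by exact_mod_cast this)

end EL
namespace EL

noncomputable def cm (t : ℝ) : ℕ → ℤ × ℤ × ℤ × ℤ
  | 0 => (1, 0, 0, 1)
  | n+1 => ((cm t n).2.1, (cm t n).1 + pq t n * (cm t n).2.1,
            (cm t n).2.2.2, (cm t n).2.2.1 + pq t n * (cm t n).2.2.2)

noncomputable def P (t : ℝ) (n : ℕ) : ℤ := (cm t n).1
noncomputable def Q (t : ℝ) (n : ℕ) : ℤ := (cm t n).2.1
noncomputable def R (t : ℝ) (n : ℕ) : ℤ := (cm t n).2.2.1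
noncomputable def S (t : ℝ) (n : ℕ) : ℤ := (cm t n).2.2.2

lemma P_succ (t : ℝ) (n : ℕ) : P t (n+1) = Q t n := rfl
lemma Q_succ (t : ℝ) (n : ℕ) : Q t (n+1) = P t n + pq t n * Q t n := rfl
lemma R_succ (t : ℝ) (n : ℕ) : R t (n+1) = S t n := rfl
lemma S_succ (t : ℝ) (n : ℕ) : S t (n+1) = R t n + pq t n * S t n := rfl
lemma P_zero (t : ℝ) : P t 0 = 1 := rfl
lemma Q_zero (t : ℝ) : Q t 0 = 0 := rfl
lemma R_zero (t : ℝ) : R t 0 = 0 := rfl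
lemma S_zero (t : ℝ) : S t 0 = 1 := rfl

lemma mat_id {t : ℝ} (h : Good t) (n : ℕ) :
    t * ((R t n : ℝ) * gaussMap^[n] t + (S t n : ℝ))
      = (P t n : ℝ) * gaussMap^[n] t + (Q t n : ℝ) := by
  induction n with
  | zero => simp [P_zero, Q_zero, R_zero, S_zero]
  | succ n ih =>
      have e2 := key_id h n
      rw [P_succ, Q_succ, R_succ, S_succ]
      push_cast
      linear_combination ((pq t n : ℝ) + gaussMap^[n+1] t) * ih
        + ((P t n : ℝ) - t * (R t n : ℝ)) * e2

lemma mat_det {t : ℝ} (n : ℕ) : P t n * S t n - Q t n * R t n = (-1) ^ n := by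
  induction n with
  | zero => simp [P_zero, Q_zero, R_zero, S_zero]
  | succ n ih =>
      rw [P_succ, Q_succ, R_succ, S_succ, pow_succ]
      linear_combination (-1 : ℤ) * ih

lemma mat_ineq {t : ℝ} (h : Good t) (n : ℕ) :
    0 ≤ P t (n+1) ∧ P t (n+1) ≤ Q t (n+1) ∧ P t (n+1) ≤ R t (n+1) ∧
      1 ≤ R t (n+1) ∧ R t (n+1) ≤ S t (n+1) ∧ Q t (n+1) ≤ S t (n+1) := by
  induction n with
  | zero =>
      have := pq_one_le h 0
      simp only [P_succ, Q_succ, R_succ, S_succ, P_zero, Q_zero, R_zero, S_zero]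
      omega
  | succ n ih =>
      obtain ⟨h1, h2, h3, h4, h5, h6⟩ := ih
      have ha := pq_one_le h (n+1)
      rw [P_succ t (n+1), Q_succ t (n+1), R_succ t (n+1), S_succ t (n+1)]
      refine ⟨by omega, by nlinarith, by omega, by omega, by nlinarith, by nlinarith⟩

end EL
namespace EL

noncomputable def Fq (A B C : ℤ) (t : ℝ) (n : ℕ) : ℤ :=
  A * (P t n)^2 + B * P t n * R t n + C * (R t n)^2
noncomputable def Gq (A B C : ℤ) (t : ℝ) (n : ℕ) : ℤ :=
  A * (Q t n)^2 + B * Q t n * S t n + C * (S t n)^2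
noncomputable def Hq (A B C : ℤ) (t : ℝ) (n : ℕ) : ℤ :=
  2*A*(P t n)*(Q t n) + B*(P t n * S t n + Q t n * R t n) + 2*C*(R t n)*(S t n)

lemma Gq_eq (A B C : ℤ) (t : ℝ) (n : ℕ) : Gq A B C t n = Fq A B C t (n+1) := by
  unfold Fq Gq; rw [P_succ, R_succ]

lemma RS_pos {t : ℝ} (h : Good t) (n : ℕ) :
    0 < (R t n : ℝ) * gaussMap^[n] t + (S t n : ℝ) := by
  obtain ⟨hi, h0, h1⟩ := good_iter h n
  cases n with
  | zero => simp [R_zero, S_zero]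
  | succ n =>
      obtain ⟨p1, p2, p3, p4, p5, p6⟩ := mat_ineq h n
      have : (1:ℝ) ≤ R t (n+1) := by exact_mod_cast p4
      have : (1:ℝ) ≤ S t (n+1) := by exact_mod_cast (le_trans p4 p5)
      nlinarith

lemma quad_iter {A B C : ℤ} {t : ℝ} (h : Good t)
    (hq : (A:ℝ) * t^2 + B * t + C = 0) (n : ℕ) :
    (Fq A B C t n : ℝ) * (gaussMap^[n] t)^2 + (Hq A B C t n : ℝ) * gaussMap^[n] t
      + (Gq A B C t n : ℝ) = 0 := by
  have e1 := mat_id h n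
  set u := gaussMap^[n] t
  unfold Fq Hq Gq
  push_cast
  linear_combination ((R t n : ℝ)*u + S t n)^2 * hq
    - ((A:ℝ)*(((P t n : ℝ)*u + Q t n) + t*((R t n : ℝ)*u + S t n)) + (B:ℝ)*((R t n : ℝ)*u + S t n)) * e1

lemma disc_eq (A B C : ℤ) {t : ℝ} (n : ℕ) :
    (Hq A B C t n)^2 - 4 * Fq A B C t n * Gq A B C t n = B^2 - 4*A*C := by
  have hd := mat_det (t := t) (n := n)
  have : (Hq A B C t n)^2 - 4 * Fq A B C t n * Gq A B C t n
      = (P t n * S t n - Q t n * R t n)^2 * (B^2 - 4*A*C) := by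
    unfold Fq Hq Gq; ring
  rw [this, hd, ← pow_mul, mul_comm n 2, pow_mul]
  simp

lemma disc_ne {A B C : ℤ} {x : ℝ} (hx : Irrational x) (hA : A ≠ 0)
    (hq : (A:ℝ) * x^2 + B * x + C = 0) : B^2 - 4*A*C ≠ 0 := by
  intro h
  have h' : ((B:ℝ)^2 - 4*A*C) = 0 := by exact_mod_cast congrArg (Int.cast : ℤ → ℝ) h
  have e : ((2*A : ℤ) : ℝ) * x + (B : ℝ) = 0 := by
    have sq : (((2*A : ℤ) : ℝ) * x + (B : ℝ))^2 = 0 := by push_cast; linear_combination 4*(A:ℝ)*hq + h'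
    exact pow_eq_zero_iff (n := 2) (by norm_num) |>.mp sq
  exact rat_lin hx (mul_ne_zero two_ne_zero hA) e

lemma Fq_ne {A B C : ℤ} {t : ℝ} (h : Good t) (hA : A ≠ 0)
    (hq : (A:ℝ) * t^2 + B * t + C = 0) (n : ℕ) : Fq A B C t n ≠ 0 := by
  intro hF
  have hu := good_iter h n
  have hq2 := quad_iter h hq n
  rw [hF] at hq2
  have hd := disc_eq A B C (t := t) (n := n)
  rw [hF] at hd
  have hD := disc_ne h.1 hA hq
  have hH : Hq A B C t n ≠ 0 := by
    intro h0; rw [h0] at hd; exact hD (by simpa using hd.symm)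
  exact rat_lin hu.1 hH (by push_cast at hq2 ⊢; linarith)

end EL
namespace EL

lemma bound_aux {A B C p q r s t u : ℝ}
    (hq : A * t^2 + B * t + C = 0)
    (e1 : t * (r * u + s) = p * u + q)
    (hdet : |p * s - q * r| = 1)
    (hr1 : 1 ≤ r) (hrs : r ≤ s) (hp0 : 0 ≤ p) (hpr : p ≤ r)
    (hu0 : 0 < u) (ht0 : 0 < t) (ht1 : t < 1) :
    |A * p^2 + B * p * r + C * r^2| ≤ 2 * |A| + |B| := by
  have hden : (0:ℝ) < r * u + s := by nlinarith
  have e2 : (p - t*r) * (r*u + s) = p*s - q*r := by linear_combination (-r) * e1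
  have habs1 : |p - t*r| * (r*u + s) = 1 := by
    rw [← abs_of_pos hden, ← abs_mul, e2, hdet]
  have e3 : A * p^2 + B * p * r + C * r^2 = (p - t*r) * (A*(p + t*r) + B*r) := by
    linear_combination r^2 * hq
  have h2 : |A*(p + t*r) + B*r| ≤ (2*|A| + |B|) * r := by
    have hb1 : |A*(p + t*r)| ≤ |A| * (2*r) := by
      rw [abs_mul]
      have : |p + t*r| ≤ 2*r := by rw [abs_of_nonneg (by nlinarith)]; nlinarith
      exact mul_le_mul_of_nonneg_left this (abs_nonneg _)
    have hb2 : |B*r| ≤ |B| * r := by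
      rw [abs_mul, abs_of_nonneg (show (0:ℝ) ≤ r by linarith)]
    calc |A*(p + t*r) + B*r| ≤ |A*(p + t*r)| + |B*r| := abs_add_le _ _
      _ ≤ |A| * (2*r) + |B| * r := add_le_add hb1 hb2
      _ = (2*|A| + |B|) * r := by ring
  have key : |A * p^2 + B * p * r + C * r^2| * (r*u + s) ≤ (2*|A| + |B|) * (r*u + s) := by
    calc |A * p^2 + B * p * r + C * r^2| * (r*u + s)
        = |p - t*r| * (r*u + s) * |A*(p + t*r) + B*r| := by rw [e3, abs_mul]; ring
      _ = |A*(p + t*r) + B*r| := by rw [habs1, one_mul]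
      _ ≤ (2*|A| + |B|) * r := h2
      _ ≤ (2*|A| + |B|) * (r*u + s) := by
          have h0 : (0:ℝ) ≤ 2*|A| + |B| := by positivity
          exact mul_le_mul_of_nonneg_left (by nlinarith) h0
  exact le_of_mul_le_mul_right (by rw [mul_comm] at key ⊢; exact key) hden

lemma Fq_bound {A B C : ℤ} {t : ℝ} (h : Good t)
    (hq : (A:ℝ) * t^2 + B * t + C = 0) (n : ℕ) :
    |Fq A B C t (n+1)| ≤ 2 * |A| + |B| := by
  obtain ⟨p1, p2, p3, p4, p5, p6⟩ := mat_ineq h n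
  obtain ⟨hu_irr, hu0, hu1⟩ := good_iter h (n+1)
  have e1 := mat_id h (n+1)
  have hdet : |(P t (n+1) : ℝ) * (S t (n+1) : ℝ) - (Q t (n+1) : ℝ) * (R t (n+1) : ℝ)| = 1 := by
    have hd := mat_det (t := t) (n := n+1)
    have : ((P t (n+1) : ℝ)) * (S t (n+1)) - (Q t (n+1)) * (R t (n+1))
        = ((-1 : ℤ)^(n+1) : ℝ) := by exact_mod_cast congrArg (Int.cast : ℤ → ℝ) hd
    rw [this]; simp [abs_pow]
  have hb := bound_aux hq e1 hdet
    (by exact_mod_cast p4) (by exact_mod_cast p5) (by exact_mod_cast p1) (by exact_mod_cast p3)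
    hu0 h.2.1 h.2.2
  have : |(Fq A B C t (n+1) : ℝ)| ≤ 2 * |(A:ℝ)| + |(B:ℝ)| := by
    unfold Fq; push_cast; convert hb using 2 <;> ring
  exact_mod_cast this

lemma abs_le_sq_add_one (H : ℤ) : |H| ≤ H^2 + 1 := by nlinarith [sq_abs H, sq_nonneg (|H| - 1), abs_nonneg H]

lemma Hq_bound {A B C : ℤ} {t : ℝ} (h : Good t)
    (hq : (A:ℝ) * t^2 + B * t + C = 0) (n : ℕ) :
    |Hq A B C t (n+1)| ≤ |B^2 - 4*A*C| + 4*(2*|A|+|B|)^2 + 1 := by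
  have hd := disc_eq A B C (t := t) (n := n+1)
  have hF := Fq_bound h hq n
  have hG : |Gq A B C t (n+1)| ≤ 2*|A|+|B| := by rw [Gq_eq]; exact Fq_bound h hq (n+1)
  have h1 : (Hq A B C t (n+1))^2 ≤ |B^2-4*A*C| + 4*(2*|A|+|B|)^2 := by
    have : (Hq A B C t (n+1))^2 = B^2-4*A*C + 4 * (Fq A B C t (n+1) * Gq A B C t (n+1)) := by linarith
    rw [this]
    have habs : |Fq A B C t (n+1) * Gq A B C t (n+1)| ≤ (2*|A|+|B|)^2 := by
      rw [abs_mul, sq]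
      exact mul_le_mul hF hG (abs_nonneg _) (le_trans (abs_nonneg _) hF)
    have := le_abs_self (B^2-4*A*C)
    have := le_abs_self (Fq A B C t (n+1) * Gq A B C t (n+1))
    linarith [abs_le.mp habs]
  have := abs_le_sq_add_one (Hq A B C t (n+1))
  linarith

end EL
namespace EL

lemma quad_two_roots {F H G u v w : ℝ} (hF : F ≠ 0)
    (hu : F*u^2 + H*u + G = 0) (hv : F*v^2 + H*v + G = 0) (hw : F*w^2 + H*w + G = 0) :
    u = v ∨ u = w ∨ v = w := by
  by_contra hc
  push_neg at hc
  obtain ⟨h1, h2, h3⟩ := hc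
  have e1 : (u - v) * (F*(u+v) + H) = 0 := by linear_combination hu - hv
  have e2 : (u - w) * (F*(u+w) + H) = 0 := by linear_combination hu - hw
  have f1 : F*(u+v) + H = 0 := by
    rcases mul_eq_zero.mp e1 with h | h
    · exact absurd (sub_eq_zero.mp h) h1
    · exact h
  have f2 : F*(u+w) + H = 0 := by
    rcases mul_eq_zero.mp e2 with h | h
    · exact absurd (sub_eq_zero.mp h) h2
    · exact h
  have : F * (v - w) = 0 := by linear_combination f1 - f2
  rcases mul_eq_zero.mp this with h | h
  · exact hF h
  · exact h3 (sub_eq_zero.mp h)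

lemma pq_shift (t : ℝ) (j m : ℕ) : pq (gaussMap^[j] t) m = pq t (m + j) := by
  unfold pq
  rw [← Function.iterate_add_apply]

lemma forward {x : ℝ} (hg : Good x) {A B C : ℤ} (hA : A ≠ 0)
    (hq : (A:ℝ) * x^2 + (B:ℝ) * x + (C:ℝ) = 0) :
    ∃ k : ℕ, 1 ≤ k ∧ ∃ N : ℕ, ∀ n : ℕ, N < n → pq x (n + k) = pq x n := by
  classical
  set K : ℤ := 2*|A| + |B| with hK
  set L : ℤ := |B^2 - 4*A*C| + 4*K^2 + 1 with hL
  set T : Finset (ℤ × ℤ × ℤ) := Finset.Icc (-K) K ×ˢ Finset.Icc (-L) L ×ˢ Finset.Icc (-K) K with hT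
  set f : ℕ → ℤ × ℤ × ℤ := fun n => (Fq A B C x (n+1), Hq A B C x (n+1), Gq A B C x (n+1)) with hf
  have hmaps : ∀ n ∈ Finset.range (2 * T.card + 1), f n ∈ T := by
    intro n _
    have h1 := Fq_bound hg hq n
    have h2 := Hq_bound hg hq n
    have h3 : |Gq A B C x (n+1)| ≤ K := by rw [Gq_eq]; exact Fq_bound hg hq (n+1)
    simp only [hf, hT, Finset.mem_product, Finset.mem_Icc]
    refine ⟨?_, ?_, ?_⟩ <;> rw [← abs_le] <;> assumption
  have hcard : T.card * 2 < (Finset.range (2 * T.card + 1)).card := by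
    rw [Finset.card_range]; omega
  obtain ⟨y, -, hy⟩ := Finset.exists_lt_card_fiber_of_mul_lt_card_of_maps_to hmaps hcard
  rw [Finset.two_lt_card_iff] at hy
  obtain ⟨i, j, l, hi, hj, hl, hij, hil, hjl⟩ := hy
  simp only [Finset.mem_filter] at hi hj hl
  have hfij : f i = f j := hi.2.trans hj.2.symm
  have hfil : f i = f l := hi.2.trans hl.2.symm
  -- the three quadratic equations
  have hFne : (Fq A B C x (i+1) : ℝ) ≠ 0 := by
    exact_mod_cast fun h => Fq_ne hg hA hq (i+1) (by exact_mod_cast h)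
  have qi := quad_iter hg hq (i+1)
  have qj := quad_iter hg hq (j+1)
  have qk := quad_iter hg hq (l+1)
  have hfij' : Fq A B C x (j+1) = Fq A B C x (i+1) ∧ Hq A B C x (j+1) = Hq A B C x (i+1) ∧
      Gq A B C x (j+1) = Gq A B C x (i+1) := by
    have := hfij.symm; simp only [hf, Prod.mk.injEq] at this; exact this
  have hfil' : Fq A B C x (l+1) = Fq A B C x (i+1) ∧ Hq A B C x (l+1) = Hq A B C x (i+1) ∧
      Gq A B C x (l+1) = Gq A B C x (i+1) := by
    have := hfil.symm; simp only [hf, Prod.mk.injEq] at this; exact this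
  rw [hfij'.1, hfij'.2.1, hfij'.2.2] at qj
  rw [hfil'.1, hfil'.2.1, hfil'.2.2] at qk
  have htri := quad_two_roots hFne qi qj qk
  -- extract two distinct indices with equal iterates
  have key : ∃ a b : ℕ, a < b ∧ gaussMap^[a+1] x = gaussMap^[b+1] x := by
    rcases htri with h | h | h
    · rcases Nat.lt_or_ge i j with hlt | hge
      · exact ⟨i, j, hlt, h⟩
      · exact ⟨j, i, by omega, h.symm⟩
    · rcases Nat.lt_or_ge i l with hlt | hge
      · exact ⟨i, l, hlt, h⟩
      · exact ⟨l, i, by omega, h.symm⟩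
    · rcases Nat.lt_or_ge j l with hlt | hge
      · exact ⟨j, l, hlt, h⟩
      · exact ⟨l, j, by omega, h.symm⟩
  obtain ⟨a, b, hab, heq⟩ := key
  refine ⟨b - a, by omega, a, fun n hn => ?_⟩
  have hiter : gaussMap^[n + (b - a)] x = gaussMap^[n] x := by
    have e1 : n + (b - a) = (n - (a+1)) + (b+1) := by omega
    have e2 : n = (n - (a+1)) + (a+1) := by omega
    rw [e1, Function.iterate_add_apply, ← heq, ← Function.iterate_add_apply, ← e2]
  unfold pq
  rw [hiter]

end EL
namespace EL

lemma pair_half {t : ℝ} (h : Good t) (i : ℕ) :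
    (gaussMap^[i] t) * (gaussMap^[i+1] t) ≤ 1/2 := by
  obtain ⟨hi, h0, h1⟩ := good_iter h i
  obtain ⟨hi', h0', h1'⟩ := good_iter h (i+1)
  have e := key_id h i
  have ha : (1:ℝ) ≤ (pq t i : ℝ) := by exact_mod_cast pq_one_le h i
  -- w * w' = 1 - a * w ≤ 1 - w
  have e2 : gaussMap^[i] t * gaussMap^[i+1] t = 1 - (pq t i : ℝ) * gaussMap^[i] t := by
    linear_combination e
  rcases le_or_gt (gaussMap^[i] t) (1/2) with hc | hc
  · nlinarith
  · nlinarith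

lemma cf_unique {y z : ℝ} (hy : Good y) (hz : Good z)
    (hpq : ∀ m, pq y m = pq z m) : y = z := by
  set u : ℕ → ℝ := fun m => gaussMap^[m] y with hu
  set v : ℕ → ℝ := fun m => gaussMap^[m] z with hv
  have hub : ∀ m, Irrational (u m) ∧ 0 < u m ∧ u m < 1 := fun m => good_iter hy m
  have hvb : ∀ m, Irrational (v m) ∧ 0 < v m ∧ v m < 1 := fun m => good_iter hz m
  have step : ∀ m, |u m - v m| = (u m * v m) * |u (m+1) - v (m+1)| := by
    intro m
    have ey := key_id hy m
    have ez := key_id hz m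
    rw [hpq m] at ey
    have e : u m - v m = (v (m+1) - u (m+1)) * (u m * v m) := by
      simp only [hu, hv]
      linear_combination (v m) * ey - (u m) * ez
    rw [e, abs_mul, abs_of_pos (mul_pos (hub m).2.1 (hvb m).2.1), abs_sub_comm]
    ring
  have hprod : ∀ m, |y - z| = (∏ i ∈ Finset.range m, (u i * v i)) * |u m - v m| := by
    intro m
    induction m with
    | zero => simp [hu, hv]
    | succ m ih =>
        rw [ih, step m, Finset.prod_range_succ]
        ring
  have hbound : ∀ m, (∏ i ∈ Finset.range (2*m), (u i * v i)) ≤ (1/2:ℝ)^m := by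
    intro m
    induction m with
    | zero => simp
    | succ m ih =>
        have h2 : 2*(m+1) = (2*m) + 1 + 1 := by ring
        rw [h2, Finset.prod_range_succ, Finset.prod_range_succ]
        have hpos : (0:ℝ) < ∏ i ∈ Finset.range (2*m), (u i * v i) :=
          Finset.prod_pos fun i _ => mul_pos (hub i).2.1 (hvb i).2.1
        have puv : u (2*m) * u (2*m+1) ≤ 1/2 := pair_half hy (2*m)
        have pvv : v (2*m) * v (2*m+1) ≤ 1 := by
          nlinarith [(hvb (2*m)).2.1, (hvb (2*m)).2.2, (hvb (2*m+1)).2.1, (hvb (2*m+1)).2.2]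
        have hfin : (u (2*m) * v (2*m)) * (u (2*m+1) * v (2*m+1)) ≤ 1/2 := by
          have hvpos : (0:ℝ) ≤ v (2*m) * v (2*m+1) :=
            (mul_pos (hvb (2*m)).2.1 (hvb (2*m+1)).2.1).le
          have := mul_le_mul puv pvv hvpos (by norm_num)
          nlinarith []
        calc (∏ i ∈ Finset.range (2*m), (u i * v i)) * (u (2*m) * v (2*m)) * (u (2*m+1) * v (2*m+1))
            ≤ (∏ i ∈ Finset.range (2*m), (u i * v i)) * (1/2) := by
              rw [mul_assoc]
              refine mul_le_mul_of_nonneg_left hfin hpos.le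
          _ ≤ (1/2:ℝ)^m * (1/2) := by linarith
          _ = (1/2:ℝ)^(m+1) := by rw [pow_succ]
  have hfinal : ∀ m, |y - z| ≤ (1/2:ℝ)^m := by
    intro m
    have h1 := hprod (2*m)
    have h2 : |u (2*m) - v (2*m)| ≤ 1 := by
      have := (hub (2*m)).2.1; have := (hub (2*m)).2.2
      have := (hvb (2*m)).2.1; have := (hvb (2*m)).2.2
      rw [abs_le]; constructor <;> linarith
    have hpos : (0:ℝ) ≤ ∏ i ∈ Finset.range (2*m), (u i * v i) :=
      (Finset.prod_pos fun i _ => mul_pos (hub i).2.1 (hvb i).2.1).le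
    calc |y - z| = (∏ i ∈ Finset.range (2*m), (u i * v i)) * |u (2*m) - v (2*m)| := h1
      _ ≤ (∏ i ∈ Finset.range (2*m), (u i * v i)) * 1 := mul_le_mul_of_nonneg_left h2 hpos
      _ ≤ (1/2:ℝ)^m := by rw [mul_one]; exact hbound m
  by_contra hne
  have hpos : 0 < |y - z| := abs_pos.mpr (sub_ne_zero.mpr hne)
  obtain ⟨m, hm⟩ := exists_pow_lt_of_lt_one hpos (by norm_num : (1/2:ℝ) < 1)
  linarith [hfinal m]

end EL
namespace EL

lemma step_down {t : ℝ} (h : Good t)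
    (hs : ∃ A B C : ℤ, ¬(A = 0 ∧ B = 0 ∧ C = 0) ∧
      (A:ℝ) * (gaussMap t)^2 + (B:ℝ) * gaussMap t + (C:ℝ) = 0) :
    ∃ A B C : ℤ, ¬(A = 0 ∧ B = 0 ∧ C = 0) ∧ (A:ℝ) * t^2 + (B:ℝ) * t + (C:ℝ) = 0 := by
  obtain ⟨A, B, C, hne, hq⟩ := hs
  set a : ℤ := ⌊1/t⌋ with ha
  have ht0 : t ≠ 0 := ne_of_gt h.2.1
  have h1 : t * (1/t) = 1 := by field_simp
  have e : t * gaussMap t = 1 - (a:ℝ) * t := by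
    rw [show gaussMap t = 1/t - (a:ℝ) from rfl]
    linear_combination h1
  refine ⟨A*a^2 - B*a + C, B - 2*A*a, A, ?_, ?_⟩
  · rintro ⟨e1, e2, e3⟩
    apply hne
    rw [e3] at e1 e2 ⊢
    simp only [zero_mul, mul_zero, zero_sub, sub_zero, neg_eq_zero] at e1 e2
    rw [e2] at e1
    simp only [zero_mul, neg_zero, zero_add, zero_sub, neg_eq_zero] at e1
    exact ⟨rfl, e2, by linarith [e1]⟩
  · push_cast
    linear_combination t^2 * hq
      - ((A:ℝ)*(1 - (a:ℝ)*t + t*gaussMap t) + (B:ℝ)*t) * e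

lemma descend {t : ℝ} (hg : Good t) (m : ℕ)
    (h : ∃ A B C : ℤ, ¬(A = 0 ∧ B = 0 ∧ C = 0) ∧
      (A:ℝ) * (gaussMap^[m] t)^2 + (B:ℝ) * (gaussMap^[m] t) + (C:ℝ) = 0) :
    ∃ A B C : ℤ, ¬(A = 0 ∧ B = 0 ∧ C = 0) ∧ (A:ℝ) * t^2 + (B:ℝ) * t + (C:ℝ) = 0 := by
  induction m generalizing t with
  | zero => simpa using h
  | succ m ih =>
      apply step_down hg
      apply ih (good_gauss hg)
      simpa [Function.iterate_succ_apply] using h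

lemma backward {x : ℝ} (hg : Good x) {k N : ℕ} (hk : 1 ≤ k)
    (hper : ∀ n : ℕ, N < n → pq x (n + k) = pq x n) :
    ∃ A B C : ℤ, A ≠ 0 ∧ (A:ℝ) * x^2 + (B:ℝ) * x + (C:ℝ) = 0 := by
  set y := gaussMap^[N+1] x with hy
  have hgy : Good y := good_iter hg (N+1)
  have hgz : Good (gaussMap^[k] y) := good_iter hgy k
  have hperiod : gaussMap^[k] y = y := by
    apply cf_unique hgz hgy
    intro m
    rw [hy, pq_shift, pq_shift, pq_shift,
      show m + k + (N+1) = (m + (N+1)) + k from by ring]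
    exact hper (m + (N+1)) (by omega)
  -- quadratic for y
  obtain ⟨k', rfl⟩ : ∃ k', k = k' + 1 := ⟨k - 1, by omega⟩
  have e1 := mat_id hgy (k'+1)
  rw [show gaussMap^[k'+1] y = y from hperiod] at e1
  obtain ⟨p1, p2, p3, p4, p5, p6⟩ := mat_ineq hgy k'
  have hqy : ((R y (k'+1) : ℤ) : ℝ) * y^2 + ((S y (k'+1) - P y (k'+1) : ℤ) : ℝ) * y
      + ((-(Q y (k'+1)) : ℤ) : ℝ) = 0 := by
    push_cast
    linear_combination e1
  have hRne : ¬((R y (k'+1) : ℤ) = 0 ∧ (S y (k'+1) - P y (k'+1)) = 0 ∧ (-(Q y (k'+1))) = 0) := by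
    rintro ⟨h1, -, -⟩; omega
  -- descend to x
  have hxq : ∃ A B C : ℤ, ¬(A = 0 ∧ B = 0 ∧ C = 0) ∧
      (A:ℝ) * x^2 + (B:ℝ) * x + (C:ℝ) = 0 :=
    descend hg (N+1) ⟨_, _, _, hRne, hqy⟩
  obtain ⟨A, B, C, hne, hq⟩ := hxq
  refine ⟨A, B, C, ?_, hq⟩
  intro hA
  rw [hA] at hq
  simp only [Int.cast_zero, zero_mul, zero_add] at hq
  have hB : B = 0 := by
    by_contra hB
    exact rat_lin hg.1 hB hq
  rw [hB] at hq
  simp only [Int.cast_zero, zero_mul, zero_add] at hq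
  exact hne ⟨hA, hB, by exact_mod_cast hq⟩

end EL

/-- Euler–Lagrange: an irrational `x ∈ [0,1]` is a quadratic irrational iff its
continued fraction expansion is eventually periodic. -/
theorem quadratic_irrational_iff_eventually_periodic :
    ∀ x : ℝ, x ∈ Set.Icc (0 : ℝ) 1 → Irrational x →
      ((∃ a b c : ℤ, a ≠ 0 ∧ (a : ℝ) * x ^ 2 + (b : ℝ) * x + (c : ℝ) = 0) ↔
        (∃ k : ℕ, 1 ≤ k ∧ ∃ N : ℕ, ∀ n : ℕ, N < n → pq x (n + k) = pq x n)) := by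
  intro x hx hirr
  have hg : EL.Good x := ⟨hirr, lt_of_le_of_ne hx.1 (hirr.ne_zero).symm,
    lt_of_le_of_ne hx.2 hirr.ne_one⟩
  constructor
  · rintro ⟨a, b, c, ha, heq⟩
    exact EL.forward hg ha heq
  · rintro ⟨k, hk, N, hper⟩
    obtain ⟨A, B, C, hA, hq⟩ := EL.backward hg hk hper
    exact ⟨A, B, C, hA, hq⟩
end

section
/- For positive integers i, j, k, l, let D = (ijkl + ij + jk + kl + li)(ijkl + ij + jk + kl + li + 4) and x = (−(ijkl + ij + kl + li − jk) + √D)/(2(ijk + i + k)). Then x ∈ (0,1), x is irrational, and x satisfies x = 1/(i + 1/(j + 1/(k + 1/(l + x)))); hence the continued fraction expansion of x is periodic with period (i,j,k,l). -/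
/-- `D = (ijkl + ij + jk + kl + li)(ijkl + ij + jk + kl + li + 4)`. -/
def D4 (i j k l : ℕ+) : ℕ :=
  ((i : ℕ) * j * k * l + i * j + j * k + k * l + l * i) *
    ((i : ℕ) * j * k * l + i * j + j * k + k * l + l * i + 4)

/-- `x = (-(ijkl + ij + kl + li - jk) + √D)/(2(ijk + i + k))`. -/
noncomputable def x4 (i j k l : ℕ+) : ℝ :=
  (-(((i : ℕ) * j * k * l : ℝ) + (i : ℕ) * j + (k : ℕ) * l + (l : ℕ) * i -
      (j : ℕ) * k) + Real.sqrt (D4 i j k l)) / (2 * ((i : ℕ) * j * k + i + k))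

set_option maxHeartbeats 1000000 in
private lemma key4 (I J K L : ℝ) (hI : 1 ≤ I) (hJ : 1 ≤ J) (hK : 1 ≤ K) (hL : 1 ≤ L)
    (s : ℝ) (hs0 : 0 ≤ s)
    (hs2 : s ^ 2 = (I*J*K*L + I*J + J*K + K*L + L*I) * (I*J*K*L + I*J + J*K + K*L + L*I + 4)) :
    0 < (-(I*J*K*L + I*J + K*L + L*I - J*K) + s) / (2*(I*J*K + I + K)) ∧
    (-(I*J*K*L + I*J + K*L + L*I - J*K) + s) / (2*(I*J*K + I + K)) < 1 ∧
    (-(I*J*K*L + I*J + K*L + L*I - J*K) + s) / (2*(I*J*K + I + K)) =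
      1 / (I + 1/(J + 1/(K + 1/(L +
        (-(I*J*K*L + I*J + K*L + L*I - J*K) + s) / (2*(I*J*K + I + K)))))) := by
  have hI0 : (0:ℝ) < I := lt_of_lt_of_le one_pos hI
  have hJ0 : (0:ℝ) < J := lt_of_lt_of_le one_pos hJ
  have hK0 : (0:ℝ) < K := lt_of_lt_of_le one_pos hK
  have hL0 : (0:ℝ) < L := lt_of_lt_of_le one_pos hL
  obtain ⟨x, hxdef⟩ : ∃ t : ℝ, t = (-(I*J*K*L + I*J + K*L + L*I - J*K) + s) / (2*(I*J*K + I + K)) := ⟨_, rfl⟩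
  rw [← hxdef]
  have hApos : (0:ℝ) < I*J*K + I + K := by positivity
  have hCpos : (0:ℝ) < J*K*L + J + L := by positivity
  have h2A : (0:ℝ) < 2*(I*J*K + I + K) := by positivity
  have hIL : (1:ℝ) ≤ I * L := by nlinarith
  have hB : (0:ℝ) < I*J*K*L + I*J + K*L + L*I - J*K := by
    nlinarith [mul_nonneg (mul_nonneg hJ0.le hK0.le) (sub_nonneg.2 hIL)]
  have h4AC : s ^ 2 = (I*J*K*L + I*J + K*L + L*I - J*K) ^ 2
      + 4 * (I*J*K + I + K) * (J*K*L + J + L) := by rw [hs2]; ring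
  have hsB : I*J*K*L + I*J + K*L + L*I - J*K < s := by
    nlinarith [mul_pos hApos hCpos]
  have hx0 : 0 < x := by rw [hxdef]; exact div_pos (by linarith) h2A
  have hxx : 2*(I*J*K + I + K)*x = s - (I*J*K*L + I*J + K*L + L*I - J*K) := by
    rw [hxdef]; field_simp; ring
  have hs_eq : s = 2*(I*J*K + I + K)*x + (I*J*K*L + I*J + K*L + L*I - J*K) := by linarith
  have h4 : (2*(I*J*K + I + K)*x + (I*J*K*L + I*J + K*L + L*I - J*K)) ^ 2
      = (I*J*K*L + I*J + K*L + L*I - J*K) ^ 2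
        + 4 * (I*J*K + I + K) * (J*K*L + J + L) := by rw [← hs_eq]; exact h4AC
  have hscaled : 4*(I*J*K + I + K) * ((I*J*K + I + K) * x^2
      + (I*J*K*L + I*J + K*L + L*I - J*K) * x - (J*K*L + J + L)) = 0 := by
    linear_combination h4
  have hquad : (I*J*K + I + K) * x^2 + (I*J*K*L + I*J + K*L + L*I - J*K) * x
      - (J*K*L + J + L) = 0 :=
    (mul_eq_zero.mp hscaled).resolve_left (by positivity)
  have hLx : (0:ℝ) < L + x := by linarith
  have h3 : (L + x) ≠ 0 := ne_of_gt hLx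
  have p2 : (0:ℝ) < K*(L+x)+1 := by nlinarith
  have p1 : (0:ℝ) < J*(K*(L+x)+1)+(L+x) := by nlinarith
  have p0 : (0:ℝ) < I*(J*(K*(L+x)+1)+(L+x)) + (K*(L+x)+1) := by nlinarith
  have heq : x = 1 / (I + 1/(J + 1/(K + 1/(L + x)))) := by
    have e2 : K + 1/(L+x) = (K*(L+x)+1)/(L+x) := by field_simp
    rw [e2, one_div_div]
    have e1 : J + (L+x)/(K*(L+x)+1) = (J*(K*(L+x)+1)+(L+x))/(K*(L+x)+1) := by
      field_simp
    rw [e1, one_div_div]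
    have e0 : I + (K*(L+x)+1)/(J*(K*(L+x)+1)+(L+x))
        = (I*(J*(K*(L+x)+1)+(L+x)) + (K*(L+x)+1))/(J*(K*(L+x)+1)+(L+x)) := by
      field_simp
    rw [e0, one_div_div, eq_div_iff (ne_of_gt p0)]
    linear_combination hquad
  refine ⟨hx0, ?_, heq⟩
  have hy1 : (0:ℝ) < 1/(J + 1/(K + 1/(L+x))) := by
    rw [show K + 1/(L+x) = (K*(L+x)+1)/(L+x) by field_simp, one_div_div,
      show J + (L+x)/(K*(L+x)+1) = (J*(K*(L+x)+1)+(L+x))/(K*(L+x)+1) by field_simp]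
    positivity
  have hIy : (0:ℝ) < I + 1/(J + 1/(K + 1/(L+x))) := by linarith
  rw [heq, div_lt_one hIy]
  linarith

private lemma step4 (m : ℕ+) {y : ℝ} (hy0 : 0 < y) (hy1 : y < 1) :
    0 < 1 / (((m:ℕ):ℝ) + y) ∧ 1 / (((m:ℕ):ℝ) + y) < 1 ∧
    gaussMap (1 / (((m:ℕ):ℝ) + y)) = y ∧ ⌊1 / (1 / (((m:ℕ):ℝ) + y))⌋ = ((m:ℕ):ℤ) := by
  have hm : (1:ℝ) ≤ ((m:ℕ):ℝ) := by exact_mod_cast m.one_le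
  have h0 : (0:ℝ) < ((m:ℕ):ℝ) + y := by linarith
  have h1 : (1:ℝ) < ((m:ℕ):ℝ) + y := by linarith
  have hinv : 1 / (1 / (((m:ℕ):ℝ) + y)) = ((m:ℕ):ℝ) + y := one_div_one_div _
  have hcast : ((m:ℕ):ℝ) + y = (((m:ℕ):ℤ):ℝ) + y := by push_cast; ring
  refine ⟨by positivity, by rw [div_lt_one h0]; exact h1, ?_, ?_⟩
  · rw [gaussMap, hinv, hcast, Int.fract_intCast_add, Int.fract_eq_self.mpr ⟨hy0.le, hy1⟩]
  · rw [hinv, hcast, Int.floor_intCast_add, Int.floor_eq_zero_iff.mpr ⟨hy0.le, hy1⟩, add_zero]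

/-- For positive integers `i, j, k, l`, the number `x4 i j k l` is an irrational
in `(0,1)` satisfying `x = 1/(i + 1/(j + 1/(k + 1/(l + x))))`; hence its
continued fraction expansion is periodic with period `(i,j,k,l)`. -/
theorem cfe_period_four (i j k l : ℕ+) :
    x4 i j k l ∈ Set.Ioo (0 : ℝ) 1 ∧
    Irrational (x4 i j k l) ∧
    x4 i j k l =
      1 / ((i : ℕ) + 1 / ((j : ℕ) + 1 / ((k : ℕ) + 1 / ((l : ℕ) + x4 i j k l)))) ∧
    ∀ n : ℕ, pq (x4 i j k l) (4 * n) = (i : ℕ) ∧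
      pq (x4 i j k l) (4 * n + 1) = (j : ℕ) ∧
      pq (x4 i j k l) (4 * n + 2) = (k : ℕ) ∧
      pq (x4 i j k l) (4 * n + 3) = (l : ℕ) := by
  have hi : (1:ℝ) ≤ ((i:ℕ):ℝ) := by exact_mod_cast i.one_le
  have hj : (1:ℝ) ≤ ((j:ℕ):ℝ) := by exact_mod_cast j.one_le
  have hk : (1:ℝ) ≤ ((k:ℕ):ℝ) := by exact_mod_cast k.one_le
  have hl : (1:ℝ) ≤ ((l:ℕ):ℝ) := by exact_mod_cast l.one_le
  have hs0 : (0:ℝ) ≤ Real.sqrt (D4 i j k l) := Real.sqrt_nonneg _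
  have hs2 : Real.sqrt (D4 i j k l) ^ 2 =
      (((i:ℕ):ℝ)*((j:ℕ):ℝ)*((k:ℕ):ℝ)*((l:ℕ):ℝ) + ((i:ℕ):ℝ)*((j:ℕ):ℝ) + ((j:ℕ):ℝ)*((k:ℕ):ℝ)
        + ((k:ℕ):ℝ)*((l:ℕ):ℝ) + ((l:ℕ):ℝ)*((i:ℕ):ℝ)) *
      (((i:ℕ):ℝ)*((j:ℕ):ℝ)*((k:ℕ):ℝ)*((l:ℕ):ℝ) + ((i:ℕ):ℝ)*((j:ℕ):ℝ) + ((j:ℕ):ℝ)*((k:ℕ):ℝ)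
        + ((k:ℕ):ℝ)*((l:ℕ):ℝ) + ((l:ℕ):ℝ)*((i:ℕ):ℝ) + 4) := by
    rw [Real.sq_sqrt (by positivity)]
    rw [D4]; push_cast; ring
  have hx4 : x4 i j k l =
      (-(((i:ℕ):ℝ)*((j:ℕ):ℝ)*((k:ℕ):ℝ)*((l:ℕ):ℝ) + ((i:ℕ):ℝ)*((j:ℕ):ℝ) + ((k:ℕ):ℝ)*((l:ℕ):ℝ)
        + ((l:ℕ):ℝ)*((i:ℕ):ℝ) - ((j:ℕ):ℝ)*((k:ℕ):ℝ)) + Real.sqrt (D4 i j k l)) /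
      (2*(((i:ℕ):ℝ)*((j:ℕ):ℝ)*((k:ℕ):ℝ) + ((i:ℕ):ℝ) + ((k:ℕ):ℝ))) := by
    rw [x4]
  obtain ⟨hx0, hx1, heq⟩ := key4 _ _ _ _ hi hj hk hl _ hs0 hs2
  rw [← hx4] at hx0 hx1 heq
  set x := x4 i j k l with hxdef
  -- irrationality
  have hP5 : 5 ≤ (i:ℕ)*j*k*l + i*j + j*k + k*l + l*i := by
    have h1 : 0 < (i:ℕ)*j*k*l := by positivity
    have h2 : 0 < (i:ℕ)*j := by positivity
    have h3 : 0 < (j:ℕ)*k := by positivity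
    have h4 : 0 < (k:ℕ)*l := by positivity
    have h5 : 0 < (l:ℕ)*i := by positivity
    omega
  have hnotsq : ¬ IsSquare (D4 i j k l) := by
    rintro ⟨r, hr⟩
    rw [D4] at hr
    set P : ℕ := (i:ℕ)*j*k*l + i*j + j*k + k*l + l*i with hP
    rcases lt_trichotomy r (P+1) with h | h | h
    · have h' : r ≤ P := by omega
      nlinarith
    · subst h; nlinarith
    · have h' : P + 2 ≤ r := by omega
      nlinarith
  have hirrs : Irrational (Real.sqrt (D4 i j k l)) :=
    irrational_sqrt_natCast_iff.mpr hnotsq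
  have hirr : Irrational x := by
    have hne : 2*((i:ℕ)*j*k + i + k) ≠ 0 := by positivity
    have h2 := ((hirrs.add_natCast ((j:ℕ)*k)).sub_natCast ((i:ℕ)*j*k*l + i*j + k*l + l*i)).div_natCast hne
    have hform : x = ((Real.sqrt (D4 i j k l) + (((j:ℕ)*k : ℕ):ℝ))
        - (((i:ℕ)*j*k*l + i*j + k*l + l*i : ℕ):ℝ)) / ((2*((i:ℕ)*j*k + i + k) : ℕ):ℝ) := by
      rw [hxdef, x4]; push_cast; ring
    rw [hform]; exact h2
  -- Gauss map dynamics
  obtain ⟨hy30, hy31, hg3, hf3⟩ := step4 l hx0 hx1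
  obtain ⟨hy20, hy21, hg2, hf2⟩ := step4 k hy30 hy31
  obtain ⟨hy10, hy11, hg1, hf1⟩ := step4 j hy20 hy21
  obtain ⟨_, _, hg0, hf0⟩ := step4 i hy10 hy11
  rw [← heq] at hg0 hf0
  have hit4 : gaussMap^[4] x = x := by
    show gaussMap (gaussMap (gaussMap (gaussMap x))) = x
    rw [hg0, hg1, hg2, hg3]
  have hiter : ∀ n : ℕ, gaussMap^[4*n] x = x := by
    intro n
    induction n with
    | zero => rfl
    | succ n ih =>
      have : 4*(n+1) = 4 + 4*n := by ring
      rw [this, Function.iterate_add_apply, ih, hit4]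
  refine ⟨⟨hx0, hx1⟩, hirr, heq, fun n => ?_⟩
  have e1 : gaussMap^[4*n+1] x = 1 / (((j:ℕ):ℝ) + 1 / (((k:ℕ):ℝ) + 1 / (((l:ℕ):ℝ) + x))) := by
    rw [show 4*n+1 = 1 + 4*n by ring, Function.iterate_add_apply, hiter,
      Function.iterate_one, hg0]
  have e2 : gaussMap^[4*n+2] x = 1 / (((k:ℕ):ℝ) + 1 / (((l:ℕ):ℝ) + x)) := by
    rw [show 4*n+2 = 1 + (4*n+1) by ring, Function.iterate_add_apply, e1,
      Function.iterate_one, hg1]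
  have e3 : gaussMap^[4*n+3] x = 1 / (((l:ℕ):ℝ) + x) := by
    rw [show 4*n+3 = 1 + (4*n+2) by ring, Function.iterate_add_apply, e2,
      Function.iterate_one, hg2]
  refine ⟨?_, ?_, ?_, ?_⟩
  · rw [pq, hiter]; exact hf0
  · rw [pq, e1]; exact hf1
  · rw [pq, e2]; exact hf2
  · rw [pq, e3]; exact hf3
end
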